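/- Let G be a group acting on itself by conjugation, and suppose every conjugacy class of G is finite of size at most n for some fixed natural number n. Then the commutator subgroup G' of G is finite. -/

import Mathlib

/-!
A proof of B. H. Neumann's theorem: a group whose conjugacy classes are
(boundedly) finite of size at most `n` has finite commutator subgroup.
-/

open Subgroup
open scoped Classical Pointwise
open scoped commutatorElement

namespace BFC

universe u

variable {G : Type u} [Group G]

/-- The conjugacy class of `g`, in the form used in the statement. -/
def cls (g : G) : Set G := {h : G | ∃ x : G, x⁻¹ * g * x = h}

lemma self_mem_cls (g : G) : g ∈ cls g := ⟨1, by simp⟩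

lemma conj_mem_cls {g h : G} (hh : h ∈ cls g) (x : G) : x⁻¹ * h * x ∈ cls g := by
  obtain ⟨t, rfl⟩ := hh
  exact ⟨t * x, by group⟩

lemma conj_mem_cls' {g h : G} (hh : h ∈ cls g) (x : G) : x * h * x⁻¹ ∈ cls g := by
  simpa using conj_mem_cls hh x⁻¹

/-- If the conjugacy class of `a` is finite, the quotient by its centralizer is finite. -/
lemma finite_quotient_centralizer (a : G) (ha : (cls a).Finite) :
    Finite (G ⧸ Subgroup.centralizer ({a} : Set G)) := by
  haveI := ha.to_subtype
  refine Finite.of_injective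
    (fun q : G ⧸ Subgroup.centralizer ({a} : Set G) =>
      (⟨q.out * a * q.out⁻¹, conj_mem_cls' (self_mem_cls a) q.out⟩ : cls a)) ?_
  intro q r h
  simp only [Subtype.mk_eq_mk] at h
  have hmem : q.out⁻¹ * r.out ∈ Subgroup.centralizer ({a} : Set G) := by
    rw [Subgroup.mem_centralizer_iff]
    intro s hs
    rw [Set.mem_singleton_iff] at hs
    rw [hs]
    -- from q.out * a * q.out⁻¹ = r.out * a * r.out⁻¹
    have key : a * (q.out⁻¹ * r.out) = q.out⁻¹ * (q.out * a * q.out⁻¹) * r.out := by group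
    rw [h] at key
    rw [key]; group
  calc q = QuotientGroup.mk q.out := (QuotientGroup.out_eq' q).symm
    _ = QuotientGroup.mk r.out := QuotientGroup.eq.mpr hmem
    _ = r := QuotientGroup.out_eq' r

lemma finiteIndex_centralizer (a : G) (ha : (cls a).Finite) :
    (Subgroup.centralizer ({a} : Set G)).FiniteIndex := by
  haveI := finite_quotient_centralizer a ha
  exact Subgroup.finiteIndex_of_finite_quotient (H := Subgroup.centralizer ({a} : Set G))

lemma centralizer_insert (a : G) (s : Set G) :
    Subgroup.centralizer (insert a s) =
      Subgroup.centralizer ({a} : Set G) ⊓ Subgroup.centralizer s := by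
  ext g
  simp only [Subgroup.mem_centralizer_iff, Subgroup.mem_inf, Set.mem_insert_iff,
    Set.mem_singleton_iff]
  constructor
  · intro h
    exact ⟨fun x hx => h x (Or.inl hx), fun x hx => h x (Or.inr hx)⟩
  · rintro ⟨h1, h2⟩ x (rfl | hx)
    · exact h1 x rfl
    · exact h2 x hx

lemma finiteIndex_centralizer_set (S : Set G) (hS : S.Finite)
    (hcls : ∀ a : G, (cls a).Finite) : (Subgroup.centralizer S).FiniteIndex := by
  refine Set.Finite.induction_on
    (motive := fun S _ => (Subgroup.centralizer S).FiniteIndex) S hS ?_ ?_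
  · show (Subgroup.centralizer (∅ : Set G)).FiniteIndex
    have : Subgroup.centralizer (∅ : Set G) = ⊤ := by
      ext g; simp [Subgroup.mem_centralizer_iff]
    rw [this]; infer_instance
  · intro a s _ _ ih
    show (Subgroup.centralizer (insert a s)).FiniteIndex
    rw [centralizer_insert]
    haveI := ih
    haveI := finiteIndex_centralizer (G := G) a (hcls a)
    infer_instance


section helpers

lemma commutatorElement_mul_center_left {a b z : G} (hz : z ∈ Subgroup.center G) :
    ⁅a * z, b⁆ = ⁅a, b⁆ := by
  have h1 : z * b = b * z := (Subgroup.mem_center_iff.mp hz b).symm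
  calc ⁅a * z, b⁆ = a * (z * b) * z⁻¹ * a⁻¹ * b⁻¹ := by
        simp only [commutatorElement_def, mul_inv_rev]; group
    _ = a * (b * z) * z⁻¹ * a⁻¹ * b⁻¹ := by rw [h1]
    _ = ⁅a, b⁆ := by simp only [commutatorElement_def]; group

lemma commutatorElement_mul_center_right {a b z : G} (hz : z ∈ Subgroup.center G) :
    ⁅a, b * z⁆ = ⁅a, b⁆ := by
  have h1 : z * a⁻¹ = a⁻¹ * z := (Subgroup.mem_center_iff.mp hz a⁻¹).symm
  calc ⁅a, b * z⁆ = a * b * (z * a⁻¹) * z⁻¹ * b⁻¹ := by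
        simp only [commutatorElement_def, mul_inv_rev]; group
    _ = a * b * (a⁻¹ * z) * z⁻¹ * b⁻¹ := by rw [h1]
    _ = ⁅a, b⁆ := by simp only [commutatorElement_def]; group

/-- If the center has finite index, the set of commutators is finite. -/
lemma commutatorSet_finite_of_finiteIndex_center
    (h : (Subgroup.center G).FiniteIndex) : (commutatorSet G).Finite := by
  haveI := h
  haveI : Finite (G ⧸ Subgroup.center G) := Subgroup.finite_quotient_of_finiteIndex
  have hsub : commutatorSet G ⊆
      (fun p : (G ⧸ Subgroup.center G) × (G ⧸ Subgroup.center G) =>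
        ⁅p.1.out, p.2.out⁆) '' Set.univ := by
    rintro x ⟨a, b, rfl⟩
    refine ⟨(QuotientGroup.mk a, QuotientGroup.mk b), Set.mem_univ _, ?_⟩
    have ha : a⁻¹ * (QuotientGroup.mk a : G ⧸ Subgroup.center G).out ∈
        Subgroup.center G := by
      rw [← QuotientGroup.eq]
      exact (QuotientGroup.out_eq' _).symm
    have hb : b⁻¹ * (QuotientGroup.mk b : G ⧸ Subgroup.center G).out ∈
        Subgroup.center G := by
      rw [← QuotientGroup.eq]
      exact (QuotientGroup.out_eq' _).symm
    have ea : (QuotientGroup.mk a : G ⧸ Subgroup.center G).out =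
        a * (a⁻¹ * (QuotientGroup.mk a : G ⧸ Subgroup.center G).out) := by group
    have eb : (QuotientGroup.mk b : G ⧸ Subgroup.center G).out =
        b * (b⁻¹ * (QuotientGroup.mk b : G ⧸ Subgroup.center G).out) := by group
    show ⁅(QuotientGroup.mk a : G ⧸ Subgroup.center G).out,
          (QuotientGroup.mk b : G ⧸ Subgroup.center G).out⁆ = ⁅a, b⁆
    rw [ea, eb, commutatorElement_mul_center_left ha, commutatorElement_mul_center_right hb]
  exact (Set.finite_univ.image _).subset hsub

/-- Schur-type conclusion at the level of sets. -/
lemma commutator_set_finite_of_commutatorSet_finite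
    (h : (commutatorSet G).Finite) :
    ((commutator G : Subgroup G) : Set G).Finite := by
  haveI := h.to_subtype
  haveI : Finite (commutator G) := inferInstance
  exact Set.finite_coe_iff.mp (by infer_instance)

lemma isOfFinOrder_of_mem_finite {M : Subgroup G} (hM : Finite M) {x : G} (hx : x ∈ M) :
    IsOfFinOrder x := by
  have h := isOfFinOrder_of_finite (⟨x, hx⟩ : M)
  obtain ⟨n, hn, h1⟩ := isOfFinOrder_iff_pow_eq_one.mp h
  refine isOfFinOrder_iff_pow_eq_one.mpr ⟨n, hn, ?_⟩
  have := congrArg (Subtype.val) h1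
  simpa using this

lemma isOfFinOrder_subtype {M : Subgroup G} {x : ↥M} (h : IsOfFinOrder (x : G)) :
    IsOfFinOrder x := by
  obtain ⟨n, hn, h1⟩ := isOfFinOrder_iff_pow_eq_one.mp h
  exact isOfFinOrder_iff_pow_eq_one.mpr ⟨n, hn, Subtype.ext (by simpa using h1)⟩

end helpers

/-- In a group with finite conjugacy classes, every commutator has finite order. -/
lemma isOfFinOrder_commutatorElement (hcls : ∀ a : G, (cls a).Finite) (a b : G) :
    IsOfFinOrder ⁅a, b⁆ := by
  set H : Subgroup G := Subgroup.closure {a, b} with hH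
  have haH : a ∈ H := Subgroup.subset_closure (by simp)
  have hbH : b ∈ H := Subgroup.subset_closure (by simp)
  set D : Subgroup G :=
    Subgroup.centralizer ({a} : Set G) ⊓ Subgroup.centralizer ({b} : Set G) with hD
  haveI : (Subgroup.centralizer ({a} : Set G)).FiniteIndex := finiteIndex_centralizer a (hcls a)
  haveI : (Subgroup.centralizer ({b} : Set G)).FiniteIndex := finiteIndex_centralizer b (hcls b)
  haveI hDfi : D.FiniteIndex := inferInstance
  haveI : (D.subgroupOf H).FiniteIndex := Subgroup.instFiniteIndex_subgroupOf D H
  have hle : D.subgroupOf H ≤ Subgroup.center ↥H := by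
    rintro ⟨x, hxH⟩ hx
    rw [Subgroup.mem_subgroupOf] at hx
    have hxa : Commute a x := by
      have := Subgroup.mem_centralizer_iff.mp hx.1 a rfl
      exact this
    have hxb : Commute b x := by
      have := Subgroup.mem_centralizer_iff.mp hx.2 b rfl
      exact this
    rw [Subgroup.mem_center_iff]
    rintro ⟨g, hgH⟩
    have hcomm : Commute g x := by
      induction hgH using Subgroup.closure_induction with
      | mem y hy =>
          rcases hy with rfl | hy
          · exact hxa
          · rw [Set.mem_singleton_iff] at hy; rw [hy]; exact hxb
      | one => exact Commute.one_left x
      | mul u v _ _ h1 h2 => exact h1.mul_left h2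
      | inv u _ h1 => exact h1.inv_left
    exact Subtype.ext hcomm
  haveI : (Subgroup.center ↥H).FiniteIndex := Subgroup.finiteIndex_of_le hle
  have hcs : (commutatorSet ↥H).Finite := commutatorSet_finite_of_finiteIndex_center (by infer_instance)
  haveI := hcs.to_subtype
  haveI : Finite (commutator ↥H) := inferInstance
  have hmem : ⁅(⟨a, haH⟩ : ↥H), (⟨b, hbH⟩ : ↥H)⁆ ∈ commutator ↥H := by
    rw [_root_.commutator_def]
    exact Subgroup.commutator_mem_commutator (Subgroup.mem_top _) (Subgroup.mem_top _)
  have hfin : IsOfFinOrder (⁅(⟨a, haH⟩ : ↥H), (⟨b, hbH⟩ : ↥H)⁆) :=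
    isOfFinOrder_of_mem_finite (by infer_instance) hmem
  obtain ⟨n, hn, h1⟩ := isOfFinOrder_iff_pow_eq_one.mp hfin
  refine isOfFinOrder_iff_pow_eq_one.mpr ⟨n, hn, ?_⟩
  have := congrArg (Subtype.val) h1
  simpa [commutatorElement_def] using this


section Dietzmann

lemma conj_list_prod (x : G) (L : List G) :
    x * L.prod = (L.map fun b => x * b * x⁻¹).prod * x := by
  induction L with
  | nil => simp
  | cons a t ih =>
      rw [List.prod_cons, List.map_cons, List.prod_cons]
      calc x * (a * t.prod) = (x * a * x⁻¹) * (x * t.prod) := by group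
        _ = (x * a * x⁻¹) * ((t.map fun b => x * b * x⁻¹).prod * x) := by rw [ih]
        _ = (x * a * x⁻¹) * (t.map fun b => x * b * x⁻¹).prod * x := by group

lemma count_le_count_map_conj (x : G) (t : List G) :
    t.count x ≤ (t.map fun b => x * b * x⁻¹).count x := by
  induction t with
  | nil => simp
  | cons a s ih =>
      rw [List.map_cons, List.count_cons, List.count_cons]
      by_cases h : x = a
      · have h2 : x * a * x⁻¹ = a := by rw [h]; group
        rw [h2]
        omega
      · have h2 : (a == x) = false := beq_false_of_ne (Ne.symm h)
        rw [h2]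
        simp only [Bool.false_eq_true, if_false]
        omega

/-- Extract one occurrence of `x` from a list, moving it to the right end. -/
lemma extract_one {X : Set G} (hX : ∀ x ∈ X, ∀ b ∈ X, x * b * x⁻¹ ∈ X) {x : G} (hx : x ∈ X) :
    ∀ L : List G, (∀ a ∈ L, a ∈ X) → x ∈ L →
    ∃ M : List G, (∀ a ∈ M, a ∈ X) ∧ M.length + 1 = L.length ∧
      L.count x ≤ M.count x + 1 ∧ M.prod * x = L.prod := by
  intro L
  induction L with
  | nil => intro _ hmem; exact absurd hmem List.not_mem_nil
  | cons a t ih =>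
      intro hmemX hmem
      by_cases ha : x = a
      · subst ha
        refine ⟨t.map fun b => x * b * x⁻¹, ?_, by simp, ?_, ?_⟩
        · intro c hc
          obtain ⟨b, hb, rfl⟩ := List.mem_map.mp hc
          exact hX x hx b (hmemX b (List.mem_cons_of_mem _ hb))
        · rw [List.count_cons]
          have h2 : (x == x) = true := beq_self_eq_true x
          rw [h2]
          simp only [if_true]
          have := count_le_count_map_conj x t
          omega
        · rw [List.prod_cons, ← conj_list_prod]
      · have hxt : x ∈ t := by
          rcases List.mem_cons.mp hmem with h | h
          · exact absurd h ha
          · exact h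
        obtain ⟨M, hMX, hMlen, hMcount, hMprod⟩ :=
          ih (fun b hb => hmemX b (List.mem_cons_of_mem _ hb)) hxt
        refine ⟨a :: M, ?_, by simp [← hMlen], ?_, ?_⟩
        · intro c hc
          rcases List.mem_cons.mp hc with rfl | hc
          · exact hmemX c List.mem_cons_self
          · exact hMX c hc
        · rw [List.count_cons, List.count_cons]
          have h2 : (a == x) = false := beq_false_of_ne (Ne.symm ha)
          rw [h2]
          simp only [Bool.false_eq_true, if_false]
          omega
        · rw [List.prod_cons, List.prod_cons, ← hMprod]; group

lemma extract_many {X : Set G} (hX : ∀ x ∈ X, ∀ b ∈ X, x * b * x⁻¹ ∈ X) {x : G} (hx : x ∈ X) :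
    ∀ (k : ℕ) (L : List G), (∀ a ∈ L, a ∈ X) → k ≤ L.count x →
    ∃ M : List G, (∀ a ∈ M, a ∈ X) ∧ M.length + k = L.length ∧ M.prod * x ^ k = L.prod := by
  intro k
  induction k with
  | zero => intro L hL _; exact ⟨L, hL, rfl, by simp⟩
  | succ k ih =>
      intro L hL hcount
      have hxL : x ∈ L := by
        have : 0 < L.count x := by omega
        exact List.count_pos_iff.mp this
      obtain ⟨M, hMX, hMlen, hMcount, hMprod⟩ := extract_one hX hx L hL hxL
      have hk : k ≤ M.count x := by omega
      obtain ⟨M', hM'X, hM'len, hM'prod⟩ := ih M hMX hk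
      refine ⟨M', hM'X, by omega, ?_⟩
      rw [pow_succ, ← mul_assoc, hM'prod, hMprod]

lemma length_eq_sum_count (s : Finset G) (L : List G) (hL : ∀ a ∈ L, a ∈ s) :
    L.length = ∑ x ∈ s, L.count x := by
  induction L with
  | nil => simp
  | cons a t ih =>
      have hat : ∀ b ∈ t, b ∈ s := fun b hb => hL b (List.mem_cons_of_mem _ hb)
      have ha : a ∈ s := hL a List.mem_cons_self
      rw [List.length_cons, ih hat]
      have : ∀ x ∈ s, (a :: t).count x = t.count x + (if x = a then 1 else 0) := by
        intro x _
        rw [List.count_cons]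
        by_cases h : x = a
        · rw [if_pos h]
          have h2 : (a == x) = true := by rw [beq_iff_eq]; exact h.symm
          rw [h2]
          simp
        · rw [if_neg h]
          have h2 : (a == x) = false := beq_false_of_ne (Ne.symm h)
          rw [h2]
          simp
      rw [Finset.sum_congr rfl this, Finset.sum_add_distrib, Finset.sum_ite_eq' s a (fun _ => 1)]
      simp [ha]

/-- Any product of elements of `X` equals a product of bounded length. -/
lemma reduce_length {X : Set G} (hXfin : X.Finite)
    (hX : ∀ x ∈ X, ∀ b ∈ X, x * b * x⁻¹ ∈ X) (htor : ∀ x ∈ X, IsOfFinOrder x) :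
    ∀ (n : ℕ) (L : List G), L.length ≤ n → (∀ a ∈ L, a ∈ X) →
    ∃ M : List G, (∀ a ∈ M, a ∈ X) ∧
      M.length ≤ ∑ x ∈ hXfin.toFinset, orderOf x ∧ M.prod = L.prod := by
  intro n
  induction n with
  | zero =>
      intro L hlen hL
      exact ⟨L, hL, by omega, rfl⟩
  | succ n ih =>
      intro L hlen hL
      set B := ∑ x ∈ hXfin.toFinset, orderOf x with hB
      by_cases hsmall : L.length ≤ B
      · exact ⟨L, hL, hsmall, rfl⟩
      · have hLs : ∀ a ∈ L, a ∈ hXfin.toFinset := fun a ha => hXfin.mem_toFinset.mpr (hL a ha)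
        have hbig : ∃ x ∈ hXfin.toFinset, orderOf x ≤ L.count x := by
          by_contra hcon
          push_neg at hcon
          have h1 : L.length = ∑ x ∈ hXfin.toFinset, L.count x :=
            length_eq_sum_count _ L hLs
          have h2 : ∑ x ∈ hXfin.toFinset, L.count x ≤ ∑ x ∈ hXfin.toFinset, orderOf x := by
            apply Finset.sum_le_sum
            intro i hi
            exact le_of_lt (hcon i hi)
          omega
        obtain ⟨x, hxs, hxcount⟩ := hbig
        have hxX : x ∈ X := hXfin.mem_toFinset.mp hxs
        obtain ⟨M, hMX, hMlen, hMprod⟩ := extract_many hX hxX (orderOf x) L hL hxcount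
        have hord : 0 < orderOf x := (htor x hxX).orderOf_pos
        have hMlen' : M.length ≤ n := by omega
        obtain ⟨M', hM'X, hM'len, hM'prod⟩ := ih M hMlen' hMX
        refine ⟨M', hM'X, hM'len, ?_⟩
        rw [hM'prod, ← hMprod, pow_orderOf_eq_one, mul_one]

/-- Iterated product sets. -/
def prodSet (X : Set G) : ℕ → Set G
  | 0 => {1}
  | k + 1 => prodSet X k ∪ X * prodSet X k

lemma prodSet_finite {X : Set G} (hX : X.Finite) : ∀ k, (prodSet X k).Finite
  | 0 => Set.finite_singleton 1
  | k + 1 => (prodSet_finite hX k).union (hX.mul (prodSet_finite hX k))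

lemma one_mem_prodSet (X : Set G) : ∀ k, (1 : G) ∈ prodSet X k
  | 0 => rfl
  | k + 1 => Set.mem_union_left _ (one_mem_prodSet X k)

lemma prod_mem_prodSet {X : Set G} :
    ∀ (L : List G), (∀ a ∈ L, a ∈ X) → ∀ k, L.length ≤ k → L.prod ∈ prodSet X k := by
  intro L
  induction L with
  | nil => intro _ k _; rw [List.prod_nil]; exact one_mem_prodSet X k
  | cons a t ih =>
      intro hL k hk
      rcases k with _ | k
      · simp at hk
      · rw [List.prod_cons]
        show a * t.prod ∈ prodSet X k ∪ X * prodSet X k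
        refine Or.inr ?_
        refine Set.mul_mem_mul (hL a List.mem_cons_self) ?_
        exact ih (fun b hb => hL b (List.mem_cons_of_mem _ hb)) k (by simpa using hk)

/-- Dietzmann's lemma. -/
lemma dietzmann {X : Set G} (hXfin : X.Finite)
    (hX : ∀ x ∈ X, ∀ b ∈ X, x * b * x⁻¹ ∈ X) (htor : ∀ x ∈ X, IsOfFinOrder x) :
    ((Subgroup.closure X : Subgroup G) : Set G).Finite := by
  set B := ∑ x ∈ hXfin.toFinset, orderOf x with hB
  -- the submonoid closure is closed under inverses
  have hinv : ∀ x ∈ Submonoid.closure X, x⁻¹ ∈ Submonoid.closure X := by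
    intro x hx
    induction hx using Submonoid.closure_induction with
    | mem y hy =>
        have hpos : 0 < orderOf y := (htor y hy).orderOf_pos
        have hyy : y * y ^ (orderOf y - 1) = 1 := by
          rw [← pow_succ']
          have : orderOf y - 1 + 1 = orderOf y := by omega
          rw [this, pow_orderOf_eq_one]
        rw [inv_eq_of_mul_eq_one_right hyy]
        exact pow_mem (Submonoid.subset_closure hy) _
    | one => simpa using Submonoid.one_mem _
    | mul u v _ _ h1 h2 =>
        rw [mul_inv_rev]
        exact Submonoid.mul_mem _ h2 h1
  -- subgroup closure equals submonoid closure (as sets)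
  have hsub : ((Subgroup.closure X : Subgroup G) : Set G) ⊆ (Submonoid.closure X : Set G) := by
    have : Subgroup.closure X ≤
        { toSubmonoid := Submonoid.closure X, inv_mem' := fun {x} hx => hinv x hx } := by
      rw [Subgroup.closure_le]
      exact Submonoid.subset_closure
    exact fun x hx => this hx
  -- submonoid closure is contained in a finite set
  have hmain : (Submonoid.closure X : Set G) ⊆ prodSet X B := by
    intro x hx
    obtain ⟨L, hLX, hLprod⟩ := Submonoid.exists_list_of_mem_closure hx
    obtain ⟨M, hMX, hMlen, hMprod⟩ :=
      reduce_length hXfin hX htor L.length L (le_refl _) hLX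
    rw [← hLprod, ← hMprod]
    exact prod_mem_prodSet M hMX B hMlen
  exact ((prodSet_finite hXfin B).subset hmain).subset hsub

end Dietzmann

/-- Conjugacy classes in quotient groups are images of conjugacy classes. -/
lemma cls_quotient (N : Subgroup G) [N.Normal] (g : G) :
    cls (QuotientGroup.mk g : G ⧸ N) = QuotientGroup.mk '' cls g := by
  ext q
  constructor
  · rintro ⟨x, rfl⟩
    obtain ⟨t, rfl⟩ := QuotientGroup.mk_surjective x
    exact ⟨t⁻¹ * g * t, ⟨t, rfl⟩, by simp⟩
  · rintro ⟨w, ⟨t, rfl⟩, rfl⟩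
    exact ⟨QuotientGroup.mk t, by simp⟩

/-- Pull back finiteness of the commutator subgroup along a quotient with finite kernel. -/
lemma commutator_pullback_finite (N : Subgroup G) [N.Normal] (hN : (N : Set G).Finite)
    (hQ : ((commutator (G ⧸ N) : Subgroup (G ⧸ N)) : Set (G ⧸ N)).Finite) :
    ((commutator G : Subgroup G) : Set G).Finite := by
  have hmap : ∀ x ∈ commutator G, (QuotientGroup.mk x : G ⧸ N) ∈ commutator (G ⧸ N) := by
    intro x hx
    have hle : Subgroup.map (QuotientGroup.mk' N) (commutator G) ≤ commutator (G ⧸ N) := by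
      rw [commutator_def, Subgroup.map_commutator, commutator_def]
      exact Subgroup.commutator_mono le_top le_top
    exact hle (Subgroup.mem_map_of_mem _ hx)
  have hsub : ((commutator G : Subgroup G) : Set G) ⊆
      ⋃ q ∈ ((commutator (G ⧸ N) : Subgroup (G ⧸ N)) : Set (G ⧸ N)),
        {x : G | (QuotientGroup.mk x : G ⧸ N) = q} := by
    intro x hx
    exact Set.mem_biUnion (hmap x hx) rfl
  refine Set.Finite.subset (Set.Finite.biUnion hQ ?_) hsub
  intro q _
  have : {x : G | (QuotientGroup.mk x : G ⧸ N) = q} ⊆ (fun n => q.out * n⁻¹) '' (N : Set G) := by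
    intro x hx
    simp only [Set.mem_setOf_eq] at hx
    have h1 : (QuotientGroup.mk x : G ⧸ N) = QuotientGroup.mk q.out := by
      rw [hx, QuotientGroup.out_eq']
    have h2 : x⁻¹ * q.out ∈ N := QuotientGroup.eq.mp h1
    exact ⟨x⁻¹ * q.out, h2, by group⟩
  exact (hN.image _).subset this

/-- If a group has an abelian subgroup of finite index and finite conjugacy classes,
its center has finite index. -/
lemma center_finiteIndex_of_abelian (A : Subgroup G) (hAfi : A.FiniteIndex)
    (hab : ∀ a ∈ A, ∀ b ∈ A, a * b = b * a) (hcls : ∀ g : G, (cls g).Finite) :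
    (Subgroup.center G).FiniteIndex := by
  haveI := hAfi
  haveI : Finite (G ⧸ A) := Subgroup.finite_quotient_of_finiteIndex
  set R : Set G := Set.range (fun q : G ⧸ A => q.out) with hR
  have hRfin : R.Finite := Set.finite_range _
  haveI : (Subgroup.centralizer R).FiniteIndex := finiteIndex_centralizer_set R hRfin hcls
  haveI : (A ⊓ Subgroup.centralizer R).FiniteIndex := inferInstance
  refine Subgroup.finiteIndex_of_le (H := A ⊓ Subgroup.centralizer R) ?_
  intro b hb
  obtain ⟨hbA, hbR⟩ := hb
  rw [Subgroup.mem_center_iff]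
  intro g
  set r : G := (QuotientGroup.mk g : G ⧸ A).out with hr
  have hmem : r⁻¹ * g ∈ A := by
    have h1 : (QuotientGroup.mk r : G ⧸ A) = QuotientGroup.mk g := QuotientGroup.out_eq' _
    exact QuotientGroup.eq.mp h1
  have hbr : r * b = b * r := Subgroup.mem_centralizer_iff.mp hbR r ⟨QuotientGroup.mk g, rfl⟩
  have hba : (r⁻¹ * g) * b = b * (r⁻¹ * g) := hab _ hmem b hbA
  calc g * b = r * ((r⁻¹ * g) * b) := by group
    _ = r * (b * (r⁻¹ * g)) := by rw [hba]
    _ = (r * b) * (r⁻¹ * g) := by group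
    _ = (b * r) * (r⁻¹ * g) := by rw [hbr]
    _ = b * g := by group

/-- The closure of a conjugation-closed set is normal. -/
lemma closure_normal_of_conj {X : Set G} (hX : ∀ x ∈ X, ∀ g : G, g * x * g⁻¹ ∈ X) :
    (Subgroup.closure X).Normal := by
  constructor
  intro a ha g
  induction ha using Subgroup.closure_induction with
  | mem x hx => exact Subgroup.subset_closure (hX x hx g)
  | one => simpa using Subgroup.one_mem _
  | mul u v _ _ h1 h2 =>
      have : g * (u * v) * g⁻¹ = (g * u * g⁻¹) * (g * v * g⁻¹) := by group
      rw [this]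
      exact Subgroup.mul_mem _ h1 h2
  | inv u _ h1 =>
      have : g * u⁻¹ * g⁻¹ = (g * u * g⁻¹)⁻¹ := by group
      rw [this]
      exact Subgroup.inv_mem _ h1

/-- Conjugacy class within a subgroup, as a subset of `G`. -/
def clsIn (C : Subgroup G) (g : G) : Set G := {h : G | ∃ x ∈ C, x⁻¹ * g * x = h}

lemma clsIn_subset_cls (C : Subgroup G) (g : G) : clsIn C g ⊆ cls g := by
  rintro h ⟨x, _, rfl⟩; exact ⟨x, rfl⟩

lemma clsIn_subset_carrier {C : Subgroup G} {g : G} (hg : g ∈ C) : clsIn C g ⊆ (C : Set G) := by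
  rintro h ⟨x, hx, rfl⟩
  exact Subgroup.mul_mem _ (Subgroup.mul_mem _ (Subgroup.inv_mem _ hx) hg) hx

lemma val_image_cls_subtype (C : Subgroup G) (z : ↥C) :
    Subtype.val '' (cls z) = clsIn C (z : G) := by
  ext h
  constructor
  · rintro ⟨w, ⟨x, rfl⟩, rfl⟩
    exact ⟨(x : G), x.2, by simp⟩
  · rintro ⟨x, hx, rfl⟩
    refine ⟨(⟨x, hx⟩ : ↥C)⁻¹ * z * ⟨x, hx⟩, ⟨⟨x, hx⟩, rfl⟩, by simp⟩


/-- Neumann's key computation: if `c` centralizes `y` and the class of `c` under the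
centralizer `C` of `y` is as large as the largest class of `G`, then for any `g₀` there are
two elements of that `C`-class differing by `δ = y⁻¹ * (g₀⁻¹ * y * g₀)`. -/
lemma key_pair {n : ℕ} (hbfc : ∀ g : G, (cls g).Finite ∧ (cls g).ncard ≤ n) {y : G}
    {c : G} (hc : c ∈ Subgroup.centralizer ({y} : Set G))
    (hfull : (clsIn (Subgroup.centralizer ({y} : Set G)) c).ncard = n)
    (g₀ : G) :
    ∃ c' ∈ clsIn (Subgroup.centralizer ({y} : Set G)) c,
      ∃ c'' ∈ clsIn (Subgroup.centralizer ({y} : Set G)) c,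
      c'' = (y⁻¹ * (g₀⁻¹ * y * g₀)) * c' := by
  set C := Subgroup.centralizer ({y} : Set G) with hC
  set S := clsIn C c with hS
  have hSfin : S.Finite := ((hbfc c).1).subset (clsIn_subset_cls C c)
  -- commuting facts
  have hyc : ∀ d ∈ C, y * d = d * y := by
    intro d hd
    exact Subgroup.mem_centralizer_iff.mp hd y rfl
  -- Step A: cls (y*c) = y • S  and  cls (y*y*c) = (y*y) • S
  have stepA : ∀ k : ℕ, cls (y ^ k * c) = (fun t => y ^ k * t) '' S := by
    intro k
    have hsub : (fun t => y ^ k * t) '' S ⊆ cls (y ^ k * c) := by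
      rintro w ⟨t, ⟨x, hxC, rfl⟩, rfl⟩
      refine ⟨x, ?_⟩
      -- x⁻¹ * (y^k * c) * x = y^k * (x⁻¹ * c * x)
      have hxy : y ^ k * x = x * y ^ k := by
        induction k with
        | zero => simp
        | succ m ih =>
            calc y ^ (m+1) * x = y ^ m * (y * x) := by rw [pow_succ']; group
              _ = y ^ m * (x * y) := by rw [hyc x hxC]
              _ = (y ^ m * x) * y := by group
              _ = (x * y ^ m) * y := by rw [ih]
              _ = x * y ^ (m+1) := by rw [pow_succ']; group
      calc x⁻¹ * (y ^ k * c) * x = x⁻¹ * y ^ k * (c * x) := by group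
        _ = x⁻¹ * y ^ k * (x * (x⁻¹ * c * x)) := by group
        _ = x⁻¹ * (y ^ k * x) * (x⁻¹ * c * x) := by group
        _ = x⁻¹ * (x * y ^ k) * (x⁻¹ * c * x) := by rw [hxy]
        _ = y ^ k * (x⁻¹ * c * x) := by group
    have hcard : ((fun t => y ^ k * t) '' S).ncard = n := by
      rw [Set.ncard_image_of_injective S (mul_right_injective (y ^ k))]
      exact hfull
    have := Set.eq_of_subset_of_ncard_le hsub
      (le_trans (hbfc (y ^ k * c)).2 (le_of_eq hcard.symm)) (hbfc (y ^ k * c)).1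
    exact this.symm
  -- memberships of the conjugates of y*c and y^2*c by g₀
  have h1 : g₀⁻¹ * (y ^ 1 * c) * g₀ ∈ cls (y ^ 1 * c) := ⟨g₀, rfl⟩
  have h2 : g₀⁻¹ * (y ^ 2 * c) * g₀ ∈ cls (y ^ 2 * c) := ⟨g₀, rfl⟩
  rw [stepA 1] at h1
  rw [stepA 2] at h2
  obtain ⟨c', hc'S, hc'⟩ := h1
  obtain ⟨c'', hc''S, hc''⟩ := h2
  simp only [] at hc' hc
  refine ⟨c', hc'S, c'', hc''S, ?_⟩
  -- now the algebra
  have hyc' : y * c' = c' * y := hyc c' (clsIn_subset_carrier hc hc'S)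
  have hyc'' : y * c'' = c'' * y := hyc c'' (clsIn_subset_carrier hc hc''S)
  set u : G := g₀⁻¹ * y * g₀ with hu
  set v : G := g₀⁻¹ * c * g₀ with hv
  have e1 : u * v = y * c' := by
    have : g₀⁻¹ * (y ^ 1 * c) * g₀ = u * v := by rw [hu, hv]; group
    rw [← this, ← hc', pow_one]
  have e2 : u * (u * v) = y * (y * c'') := by
    have : g₀⁻¹ * (y ^ 2 * c) * g₀ = u * (u * v) := by rw [hu, hv, pow_two]; group
    rw [← this, ← hc'', pow_two]
    group
  have e3 : u * (y * c') = y * (y * c'') := by rw [← e1]; exact e2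
  -- u * c' * y = y * c'' * y  hence  u * c' = y * c''
  have e4 : (u * c') * y = (y * c'') * y := by
    calc (u * c') * y = u * (c' * y) := by group
      _ = u * (y * c') := by rw [hyc']
      _ = y * (y * c'') := e3
      _ = y * (c'' * y) := by rw [hyc'']
      _ = (y * c'') * y := by group
  have e5 : u * c' = y * c'' := mul_right_cancel e4
  -- conclude c'' = (y⁻¹ * u) * c'
  calc c'' = y⁻¹ * (y * c'') := by group
    _ = y⁻¹ * (u * c') := by rw [e5]
    _ = (y⁻¹ * (g₀⁻¹ * y * g₀)) * c' := by rw [hu]; group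


lemma cls_subtype_finite (C : Subgroup G) (z : ↥C) (hf : (cls (z : G)).Finite) :
    (cls z).Finite := by
  apply Set.Finite.of_finite_image (f := Subtype.val) ?_
    (fun a _ b _ h => Subtype.val_injective h)
  rw [val_image_cls_subtype]
  exact hf.subset (clsIn_subset_cls C _)

lemma cls_subtype_ncard (C : Subgroup G) (z : ↥C) :
    (cls z).ncard = (clsIn C (z : G)).ncard := by
  rw [← val_image_cls_subtype, Set.ncard_image_of_injective _ Subtype.val_injective]

/-- B. H. Neumann's theorem, by induction on the bound. -/
theorem main : ∀ (n : ℕ) {G : Type u} [Group G],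
    (∀ g : G, (cls g).Finite ∧ (cls g).ncard ≤ n) →
    ((commutator G : Subgroup G) : Set G).Finite := by
  intro n
  induction n using Nat.strong_induction_on with
  | _ n IH =>
  intro G _ hbfc
  match n, IH, hbfc with
  | 0, IH, hbfc => 
    exfalso
    obtain ⟨hfin, hle⟩ := hbfc 1
    have h1 : (1:G) ∈ cls 1 := self_mem_cls 1
    have := (Set.ncard_pos hfin).mpr ⟨1, h1⟩
    omega
  | 1, IH, hbfc =>
    -- abelian case
    have hab : ∀ a b : G, Commute a b := by
      intro a b
      have hmem : a⁻¹ * b * a ∈ cls b := ⟨a, rfl⟩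
      have heq : a⁻¹ * b * a = b := by
        by_contra hne
        have h2 : 1 < (cls b).ncard := by
          apply (Set.one_lt_ncard (hbfc b).1).mpr
          exact ⟨_, hmem, _, self_mem_cls b, hne⟩
        have := (hbfc b).2
        omega
      have : b * a = a * b := by
        calc b * a = a * (a⁻¹ * b * a) := by group
          _ = a * b := by rw [heq]
      exact this.symm
    have hbot : commutator G = ⊥ := by
      rw [commutator_def, eq_bot_iff]
      apply Subgroup.commutator_le.mpr
      intro g1 _ g2 _
      rw [Subgroup.mem_bot]
      exact commutatorElement_eq_one_iff_commute.mpr (hab g1 g2)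
    rw [hbot]
    simp only [Subgroup.coe_bot]
    exact Set.finite_singleton 1
  | (m + 2), IH, hbfc =>
    by_cases hsmall : ∀ g : G, (cls g).ncard ≤ m + 1
    · exact IH (m+1) (by omega) (fun g => ⟨(hbfc g).1, hsmall g⟩)
    push_neg at hsmall
    obtain ⟨y, hy⟩ := hsmall
    have hycard : (cls y).ncard = m + 2 := le_antisymm (hbfc y).2 (by omega)
    set C := Subgroup.centralizer ({y} : Set G) with hC
    -- Step 1: the commutator subgroup of the centralizer is finite
    have HCfin : ((commutator ↥C : Subgroup ↥C) : Set ↥C).Finite := by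
      by_cases hfull : ∃ c ∈ C, (clsIn C c).ncard = m + 2
      · -- the hard case: collapse classes modulo N
        obtain ⟨c₀, hc₀C, hc₀full⟩ := hfull
        -- pick g₀ with y^{g₀} ≠ y
        have h2lt : 1 < (cls y).ncard := by omega
        obtain ⟨h₀, hh₀mem, hh₀ne⟩ := Set.exists_ne_of_one_lt_ncard h2lt y
        obtain ⟨g₀, hg₀⟩ := hh₀mem
        set δ : G := y⁻¹ * (g₀⁻¹ * y * g₀) with hδ
        have hδne : δ ≠ 1 := by
          intro hcon
          rw [hδ, hg₀, inv_mul_eq_one] at hcon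
          exact hh₀ne hcon.symm
        obtain ⟨c', hc'S, c'', hc''S, heq⟩ := key_pair hbfc hc₀C hc₀full g₀
        have hδC : δ ∈ C := by
          have hd : δ = c'' * c'⁻¹ := by rw [hδ, heq]; group
          rw [hd]
          exact Subgroup.mul_mem _
            (clsIn_subset_carrier hc₀C hc''S)
            (Subgroup.inv_mem _ (clsIn_subset_carrier hc₀C hc'S))
        set δC : ↥C := ⟨δ, hδC⟩ with hδCdef
        set X : Set ↥C := cls δC with hX
        have hXfin : X.Finite := cls_subtype_finite C δC ((hbfc δ).1)
        have hXconj : ∀ x ∈ X, ∀ g : ↥C, g * x * g⁻¹ ∈ X := fun x hx g => conj_mem_cls' hx g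
        have hXtor : ∀ x ∈ X, IsOfFinOrder x := by
          intro x hx
          obtain ⟨t, ht⟩ := hx
          apply isOfFinOrder_subtype
          have hval : (x : G) = ⁅(t:G)⁻¹ * y⁻¹ * (t:G), (t:G)⁻¹ * g₀⁻¹ * (t:G)⁆ := by
            rw [← ht]
            push_cast
            rw [show ((δC : ↥C) : G) = δ from rfl, hδ]
            simp only [commutatorElement_def]
            group
          rw [hval]
          exact isOfFinOrder_commutatorElement (fun a => (hbfc a).1) _ _
        set N : Subgroup ↥C := Subgroup.closure X with hN
        haveI hNnormal : N.Normal := closure_normal_of_conj hXconj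
        have hNfin : ((N : Subgroup ↥C) : Set ↥C).Finite :=
          dietzmann hXfin (fun x hx b hb => conj_mem_cls' hb x) hXtor
        have hδN : δC ∈ N := Subgroup.subset_closure (self_mem_cls δC)
        -- classes of the quotient are bounded by m+1
        have hquot : ∀ q : ↥C ⧸ N, (cls q).Finite ∧ (cls q).ncard ≤ m + 1 := by
          intro q
          obtain ⟨z, rfl⟩ := QuotientGroup.mk_surjective q
          have hfinz : (cls z).Finite := cls_subtype_finite C z ((hbfc (z:G)).1)
          rw [cls_quotient N z]
          refine ⟨hfinz.image _, ?_⟩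
          by_cases hzfull : (clsIn C (z : G)).ncard = m + 2
          · -- collapse
            obtain ⟨d', hd'S, d'', hd''S, heq2⟩ := key_pair hbfc z.2 hzfull g₀
            have hd'C : d' ∈ C := clsIn_subset_carrier z.2 hd'S
            have hd''C : d'' ∈ C := clsIn_subset_carrier z.2 hd''S
            set z' : ↥C := ⟨d', hd'C⟩ with hz'def
            set z'' : ↥C := ⟨d'', hd''C⟩ with hz''def
            have hz'mem : z' ∈ cls z := by
              obtain ⟨x1, hx1, hval1⟩ := hd'S
              exact ⟨⟨x1, hx1⟩, Subtype.ext (by push_cast; exact hval1)⟩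
            have hz''mem : z'' ∈ cls z := by
              obtain ⟨x1, hx1, hval1⟩ := hd''S
              exact ⟨⟨x1, hx1⟩, Subtype.ext (by push_cast; exact hval1)⟩
            have hz'ne : z'' ≠ z' := by
              intro hcon
              have : d'' = d' := congrArg Subtype.val hcon
              rw [heq2] at this
              have : δ = 1 := by
                have := mul_right_cancel (b := d') (a := δ) (c := 1) (by simpa using this)
                exact this
              exact hδne this
            have hz''eq : z'' = δC * z' := Subtype.ext (by push_cast; exact heq2)
            have hmkeq : (QuotientGroup.mk z'' : ↥C ⧸ N) = QuotientGroup.mk z' := by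
              rw [QuotientGroup.eq]
              have hval : z''⁻¹ * z' = z'⁻¹ * δC⁻¹ * z' := by rw [hz''eq]; group
              rw [hval]
              have h1 : δC⁻¹ ∈ N := Subgroup.inv_mem _ hδN
              have h2 := hNnormal.conj_mem _ h1 z'⁻¹
              simpa using h2
            have himg : (QuotientGroup.mk : ↥C → ↥C ⧸ N) '' (cls z) =
                QuotientGroup.mk '' ((cls z) \ {z''}) := by
              ext w
              constructor
              · rintro ⟨v, hv, rfl⟩
                by_cases hvz : v = z''
                · refine ⟨z', ⟨hz'mem, ?_⟩, ?_⟩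
                  · simp only [Set.mem_singleton_iff]
                    exact fun hcon => hz'ne hcon.symm
                  · rw [hvz, hmkeq]
                · exact ⟨v, ⟨hv, hvz⟩, rfl⟩
              · rintro ⟨v, ⟨hv, _⟩, rfl⟩
                exact ⟨v, hv, rfl⟩
            rw [himg]
            have hcount : ((cls z) \ {z''}).ncard = (cls z).ncard - 1 :=
              Set.ncard_diff_singleton_of_mem hz''mem
            have hclszcard : (cls z).ncard = m + 2 := by
              rw [cls_subtype_ncard C z]; exact hzfull
            have := Set.ncard_image_le (f := (QuotientGroup.mk : ↥C → ↥C ⧸ N))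
              (s := (cls z) \ {z''}) (hfinz.diff)
            omega
          · -- not full
            have h3 : (clsIn C (z:G)).ncard ≤ m + 2 := by
              refine le_trans (Set.ncard_le_ncard (clsIn_subset_cls _ _) (hbfc (z:G)).1) ?_
              exact (hbfc (z:G)).2
            have h2 : (cls z).ncard ≤ m + 1 := by
              rw [cls_subtype_ncard C z]
              omega
            have := Set.ncard_image_le (f := (QuotientGroup.mk : ↥C → ↥C ⧸ N))
              (s := cls z) hfinz
            omega
        have hQfin := IH (m+1) (by omega) hquot
        exact commutator_pullback_finite N hNfin hQfin
      · -- easy case: all classes of the centralizer are small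
        push_neg at hfull
        apply IH (m+1) (by omega)
        intro z
        have hfinz : (cls z).Finite := cls_subtype_finite C z ((hbfc (z:G)).1)
        refine ⟨hfinz, ?_⟩
        have h3 : (clsIn C (z:G)).ncard ≤ m + 2 := by
          refine le_trans (Set.ncard_le_ncard (clsIn_subset_cls _ _) (hbfc (z:G)).1) ?_
          exact (hbfc (z:G)).2
        have h4 := hfull (z : G) z.2
        rw [cls_subtype_ncard C z]
        omega
    -- Step 2: conclude for G
    set K := Subgroup.centralizer (cls y) with hK
    haveI hKnormal : K.Normal := by
      constructor
      intro k hk g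
      rw [Subgroup.mem_centralizer_iff] at hk ⊢
      intro h hh
      have hh' : g⁻¹ * h * g ∈ cls y := conj_mem_cls hh g
      have hcomm := hk _ hh'
      calc h * (g * k * g⁻¹) = g * ((g⁻¹ * h * g) * k) * g⁻¹ := by group
        _ = g * (k * (g⁻¹ * h * g)) * g⁻¹ := by rw [hcomm]
        _ = (g * k * g⁻¹) * h := by group
    haveI hKfi : K.FiniteIndex :=
      finiteIndex_centralizer_set (cls y) (hbfc y).1 (fun a => (hbfc a).1)
    have hKleC : K ≤ C := by
      apply Subgroup.centralizer_le
      intro t ht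
      rw [Set.mem_singleton_iff] at ht
      rw [ht]
      exact self_mem_cls y
    haveI : (⁅K, K⁆ : Subgroup G).Normal := Subgroup.commutator_normal K K
    have hKKle : ⁅K, K⁆ ≤ Subgroup.map C.subtype (commutator ↥C) := by
      rw [_root_.commutator_def, Subgroup.map_commutator]
      have hmt : Subgroup.map C.subtype ⊤ = C := by
        rw [← MonoidHom.range_eq_map, Subgroup.range_subtype]
      rw [hmt]
      exact Subgroup.commutator_mono hKleC hKleC
    have hKKfin : ((⁅K, K⁆ : Subgroup G) : Set G).Finite := by
      have hmapfin : ((Subgroup.map C.subtype (commutator ↥C) : Subgroup G) : Set G).Finite := by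
        rw [Subgroup.coe_map]
        exact HCfin.image _
      exact hmapfin.subset hKKle
    -- quotient by ⁅K,K⁆
    have hbfcQ : ∀ q : G ⧸ ⁅K, K⁆, (cls q).Finite := by
      intro q
      obtain ⟨g, rfl⟩ := QuotientGroup.mk_surjective q
      rw [cls_quotient]
      exact ((hbfc g).1.image _)
    set A := Subgroup.map (QuotientGroup.mk' ⁅K, K⁆) K with hA
    have hAfi : A.FiniteIndex := by
      have hcomap : Subgroup.comap (QuotientGroup.mk' ⁅K, K⁆) A = K := by
        rw [hA, Subgroup.comap_map_eq, QuotientGroup.ker_mk']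
        exact sup_eq_left.mpr (Subgroup.commutator_le_left K K)
      constructor
      have hidx := Subgroup.index_comap_of_surjective A
        (QuotientGroup.mk'_surjective ⁅K, K⁆)
      rw [hcomap] at hidx
      rw [← hidx]
      exact hKfi.index_ne_zero
    have hAab : ∀ a ∈ A, ∀ b ∈ A, a * b = b * a := by
      intro a ha b hb
      obtain ⟨k1, hk1, rfl⟩ := Subgroup.mem_map.mp ha
      obtain ⟨k2, hk2, rfl⟩ := Subgroup.mem_map.mp hb
      rw [← map_mul, ← map_mul]
      show QuotientGroup.mk (k1 * k2) = QuotientGroup.mk (k2 * k1)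
      rw [QuotientGroup.eq]
      have hcomm : (k1 * k2)⁻¹ * (k2 * k1) = ⁅k2⁻¹, k1⁻¹⁆ := by
        simp only [commutatorElement_def]
        group
      rw [hcomm]
      exact Subgroup.commutator_mem_commutator (Subgroup.inv_mem _ hk2) (Subgroup.inv_mem _ hk1)
    have hZfi := center_finiteIndex_of_abelian A hAfi hAab hbfcQ
    have hQcomm := commutator_set_finite_of_commutatorSet_finite
      (commutatorSet_finite_of_finiteIndex_center hZfi)
    exact commutator_pullback_finite ⁅K, K⁆ hKKfin hQcomm


end BFC

/-- B. H. Neumann's theorem: if every conjugacy class of `G` has at most `n` elements, then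
the commutator subgroup of `G` is finite. -/
theorem stmt_9 {G : Type*} [Group G] (n : ℕ)
    (h : ∀ g : G, ({h : G | ∃ x : G, x⁻¹ * g * x = h}).Finite ∧
      ({h : G | ∃ x : G, x⁻¹ * g * x = h}).ncard ≤ n) :
    ((commutator G : Subgroup G) : Set G).Finite :=
  BFC.main n h
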